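/- arXiv:1806.08693 — 2 statements merged into one kernel-verified Lean document; each statement's English description precedes it below -/
import Mathlib

section
/- For every integer s ≥ 2, the embedded pair consisting of the SSPERK(s,2) coefficient matrix A together with the embedded weights b̃₂ = ((s+1)/s², 1/s, …, 1/s, (s−1)/s²)ᵀ satisfies the SSP conditions at parameter r = s − 1: with K̃ = [[A, 0], [b̃₂ᵀ, 0]] ∈ ℝ^{(s+1)×(s+1)}, every entry of K̃(I + (s−1)K̃)^{-1} is nonnegative and every component of (s−1)·K̃(I + (s−1)K̃)^{-1}e is at most 1. Hence the embedded method has SSP coefficient at least s − 1. -/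
open Matrix

def mkK {s : ℕ} (A : Matrix (Fin s) (Fin s) ℝ) (w : Fin s → ℝ) :
    Matrix (Fin (s + 1)) (Fin (s + 1)) ℝ :=
  Matrix.of fun i j =>
    if hj : (j : ℕ) < s then
      if hi : (i : ℕ) < s then A ⟨i, hi⟩ ⟨j, hj⟩ else w ⟨j, hj⟩
    else 0

noncomputable def sspC (s : ℕ) (r : ℝ) (g : ℕ → ℝ) :
    Matrix (Fin (s + 1)) (Fin (s + 1)) ℝ :=
  Matrix.of fun i j =>
    (if i = j then (1 : ℝ) else 0)
    + (if (i : ℕ) = (j : ℕ) + 1 ∧ (i : ℕ) < s then -1 else 0)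
    + (if (i : ℕ) = s ∧ (j : ℕ) < s then -(r * (g j - g ((j : ℕ) + 1))) else 0)

theorem sspM_apply (s : ℕ) (r : ℝ) (g : ℕ → ℝ)
    (hgz : ∀ m : ℕ, ¬ m < s → g m = 0)
    (K : Matrix (Fin (s+1)) (Fin (s+1)) ℝ)
    (hK : ∀ i j : Fin (s + 1), K i j =
      if (j : ℕ) < s then
        (if (i : ℕ) < s then (if (j : ℕ) < (i : ℕ) then 1 / r else 0) else g j)
      else 0) :
    ∀ i j : Fin (s + 1), (K * sspC s r g) i j =
      if (i : ℕ) < s then (if (i : ℕ) = (j : ℕ) + 1 then 1 / r else 0)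
      else g j - g ((j : ℕ) + 1) := by
  intro i j
  rw [Matrix.mul_apply]
  have expand : ∀ k : Fin (s + 1), K i k * sspC s r g k j
      = (if k = j then K i k else 0)
      + K i k * (if (k : ℕ) = (j : ℕ) + 1 ∧ (k : ℕ) < s then -1 else 0)
      + K i k * (if (k : ℕ) = s ∧ (j : ℕ) < s then -(r * (g j - g ((j:ℕ) + 1))) else 0) := by
    intro k
    simp only [sspC, Matrix.of_apply, mul_add, mul_ite, mul_one, mul_zero]
  simp only [expand]
  rw [Finset.sum_add_distrib, Finset.sum_add_distrib]
  have h1 : (∑ k : Fin (s+1), if k = j then K i k else 0) = K i j := by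
    simp [Finset.sum_ite_eq']
  have h3 : (∑ k : Fin (s+1), K i k *
      (if (k : ℕ) = s ∧ (j : ℕ) < s then -(r * (g j - g ((j:ℕ) + 1))) else 0)) = 0 := by
    apply Finset.sum_eq_zero
    intro k _
    by_cases hk : (k : ℕ) = s ∧ (j : ℕ) < s
    · have : K i k = 0 := by
        rw [hK, if_neg (show ¬ (k : ℕ) < s by omega)]
      rw [this, zero_mul]
    · rw [if_neg hk, mul_zero]
  have h2 : (∑ k : Fin (s+1), K i k *
      (if (k : ℕ) = (j : ℕ) + 1 ∧ (k : ℕ) < s then (-1:ℝ) else 0))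
      = if hj1 : (j : ℕ) + 1 < s then -K i ⟨(j:ℕ)+1, by omega⟩ else 0 := by
    by_cases hj1 : (j : ℕ) + 1 < s
    · rw [dif_pos hj1]
      rw [Finset.sum_eq_single (⟨(j:ℕ)+1, by omega⟩ : Fin (s+1))]
      · rw [if_pos ⟨rfl, hj1⟩]; ring
      · intro k _ hne
        rw [if_neg, mul_zero]
        rintro ⟨hk, -⟩
        exact hne (Fin.ext hk)
      · intro h; exact absurd (Finset.mem_univ _) h
    · rw [dif_neg hj1]
      apply Finset.sum_eq_zero
      intro k _
      rw [if_neg, mul_zero]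
      rintro ⟨hk, hks⟩
      omega
  rw [h1, h2, h3, add_zero]
  by_cases hi : (i : ℕ) < s
  · rw [if_pos hi, hK]
    by_cases hij : (i : ℕ) = (j : ℕ) + 1
    · rw [if_pos hij]
      have hjs : (j : ℕ) < s := by omega
      rw [if_pos hjs, if_pos hi, if_pos (by omega : (j:ℕ) < (i:ℕ))]
      by_cases hj1 : (j : ℕ) + 1 < s
      · rw [dif_pos hj1, hK]
        simp only [if_pos hj1, if_pos hi]
        rw [if_neg (by omega : ¬ ((j:ℕ)+1 < (i:ℕ)))]
        ring
      · rw [dif_neg hj1]; ring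
    · rw [if_neg hij]
      by_cases hj1 : (j : ℕ) + 1 < s
      · rw [dif_pos hj1, hK]
        simp only [if_pos hj1, if_pos hi]
        by_cases hjs : (j : ℕ) < s
        · rw [if_pos hjs]
          by_cases hji : (j : ℕ) < (i : ℕ)
          · rw [if_pos hji, if_pos (by omega : (j:ℕ)+1 < (i:ℕ))]; ring
          · rw [if_neg hji, if_neg (by omega : ¬ ((j:ℕ)+1 < (i:ℕ)))]; ring
        · rw [if_neg hjs, if_neg (by omega : ¬ ((j:ℕ)+1 < (i:ℕ)))]; ring
      · rw [dif_neg hj1]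
        by_cases hjs : (j : ℕ) < s
        · rw [if_pos hjs, if_pos hi, if_neg (by omega : ¬ ((j:ℕ) < (i:ℕ)))]; ring
        · rw [if_neg hjs]; ring
  · rw [if_neg hi, hK]
    by_cases hjs : (j : ℕ) < s
    · rw [if_pos hjs, if_neg hi]
      by_cases hj1 : (j : ℕ) + 1 < s
      · rw [dif_pos hj1, hK, if_pos hj1, if_neg hi]; ring
      · rw [dif_neg hj1, hgz _ hj1]; ring
    · rw [if_neg hjs, dif_neg (by omega : ¬ ((j:ℕ)+1 < s)),
        hgz _ hjs, hgz _ (by omega : ¬ ((j:ℕ)+1 < s))]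
      ring

theorem sspC_right_inv (s : ℕ) (r : ℝ) (hrne : r ≠ 0) (g : ℕ → ℝ)
    (hgz : ∀ m : ℕ, ¬ m < s → g m = 0)
    (K : Matrix (Fin (s+1)) (Fin (s+1)) ℝ)
    (hK : ∀ i j : Fin (s + 1), K i j =
      if (j : ℕ) < s then
        (if (i : ℕ) < s then (if (j : ℕ) < (i : ℕ) then 1 / r else 0) else g j)
      else 0) :
    (1 + r • K) * sspC s r g = 1 := by
  have hM := sspM_apply s r g hgz K hK
  ext i j
  rw [Matrix.add_mul, Matrix.one_mul, Matrix.smul_mul, Matrix.add_apply,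
    Matrix.smul_apply, hM, smul_eq_mul, Matrix.one_apply]
  simp only [sspC, Matrix.of_apply, Fin.ext_iff]
  have hrr : r * (1 / r) = 1 := by rw [mul_one_div, div_self hrne]
  have hi1 : (i : ℕ) < s + 1 := i.isLt
  have hj1 : (j : ℕ) < s + 1 := j.isLt
  by_cases hjs : (j : ℕ) < s
  · split_ifs <;> first | omega | linarith [hrr] | ring
  · have h0 : g ((j:ℕ)) = 0 := hgz _ hjs
    have h1 : g ((j:ℕ) + 1) = 0 := hgz _ (by omega)
    rw [h0, h1]
    split_ifs <;> first | omega | linarith [hrr] | ring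

/-- The embedded pair consisting of the SSPERK(s,2) coefficient matrix `A`
(`a_{ij} = 1/(s-1)` for `j < i`) and embedded weights
`b̃₂ = ((s+1)/s², 1/s, …, 1/s, (s-1)/s²)ᵀ` satisfies the SSP conditions at
`r = s - 1`: `K̃(I + (s-1)K̃)⁻¹ ≥ 0` entrywise and `(s-1)K̃(I + (s-1)K̃)⁻¹ e ≤ e`
componentwise; hence the embedded method has SSP coefficient at least `s - 1`. -/
theorem ssperk_s2_embedded_b2_ssp_conditions
    (s : ℕ) (hs : 2 ≤ s)
    (A : Matrix (Fin s) (Fin s) ℝ)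
    (hA : ∀ i j : Fin s, A i j = if (j : ℕ) < (i : ℕ) then 1 / ((s : ℝ) - 1) else 0)
    (bt : Fin s → ℝ)
    (hbt : ∀ j : Fin s, bt j =
      if (j : ℕ) = 0 then ((s : ℝ) + 1) / (s : ℝ) ^ 2
      else if (j : ℕ) = s - 1 then ((s : ℝ) - 1) / (s : ℝ) ^ 2
      else 1 / (s : ℝ)) :
    (∀ i j : Fin (s + 1),
      0 ≤ (mkK A bt * (1 + ((s : ℝ) - 1) • mkK A bt)⁻¹) i j) ∧
    (∀ i : Fin (s + 1),
      (((s : ℝ) - 1) • (mkK A bt * (1 + ((s : ℝ) - 1) • mkK A bt)⁻¹)).mulVec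
        (fun _ => 1) i ≤ 1) := by
  have hs2 : (2 : ℝ) ≤ (s : ℝ) := by exact_mod_cast hs
  have hs0 : (0 : ℝ) < (s : ℝ) := by linarith
  have hsq : (0 : ℝ) < (s : ℝ) ^ 2 := by positivity
  set r : ℝ := (s : ℝ) - 1 with hrdef
  have hr0 : 0 < r := by rw [hrdef]; linarith
  have hrne : r ≠ 0 := ne_of_gt hr0
  set g : ℕ → ℝ := fun m =>
    if m < s then
      (if m = 0 then ((s : ℝ) + 1) / (s : ℝ) ^ 2
       else if m = s - 1 then ((s : ℝ) - 1) / (s : ℝ) ^ 2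
       else 1 / (s : ℝ)) else 0 with hg
  have hgz : ∀ m : ℕ, ¬ m < s → g m = 0 := by
    intro m hm; rw [hg]; exact if_neg hm
  set K := mkK A bt with hKdef
  have hK : ∀ i j : Fin (s + 1), K i j =
      if (j : ℕ) < s then
        (if (i : ℕ) < s then (if (j : ℕ) < (i : ℕ) then 1 / r else 0) else g j)
      else 0 := by
    intro i j
    rw [hKdef]
    show (if hj : (j : ℕ) < s then
      if hi : (i : ℕ) < s then A ⟨i, hi⟩ ⟨j, hj⟩ else bt ⟨j, hj⟩ else 0) = _
    by_cases hj : (j : ℕ) < s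
    · rw [dif_pos hj, if_pos hj]
      by_cases hi : (i : ℕ) < s
      · rw [dif_pos hi, if_pos hi, hA]
      · rw [dif_neg hi, if_neg hi, hbt, hg]
        simp only [if_pos hj, hrdef]
    · rw [dif_neg hj, if_neg hj]
  have hinv : (1 + r • K)⁻¹ = sspC s r g :=
    Matrix.inv_eq_right_inv (sspC_right_inv s r hrne g hgz K hK)
  have hM := sspM_apply s r g hgz K hK
  -- nonnegativity facts about g
  have hgnn : ∀ m : ℕ, 0 ≤ g m := by
    intro m; rw [hg]; dsimp only
    split_ifs
    · positivity
    · exact div_nonneg (by linarith) (le_of_lt hsq)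
    · positivity
    · exact le_refl 0
  have hgstep : ∀ m : ℕ, g (m + 1) ≤ g m := by
    intro m; rw [hg]; dsimp only
    rcases Nat.lt_or_ge m s with hm | hm
    · rcases Nat.lt_or_ge (m + 1) s with hm1 | hm1
      · rw [if_pos hm, if_pos hm1, if_neg (by omega : ¬ m + 1 = 0)]
        by_cases h0 : m = 0
        · rw [if_pos h0]
          by_cases hlast : m + 1 = s - 1
          · rw [if_pos hlast]
            rw [div_le_div_iff₀ hsq hsq]; nlinarith
          · rw [if_neg hlast]
            rw [div_le_div_iff₀ hs0 hsq]; nlinarith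
        · rw [if_neg h0, if_neg (by omega : ¬ m = s - 1)]
          by_cases hlast : m + 1 = s - 1
          · rw [if_pos hlast, div_le_div_iff₀ hsq hs0]; nlinarith
          · rw [if_neg hlast]
      · rw [if_pos hm, if_neg (show ¬ m + 1 < s by omega),
          if_neg (show ¬ m = 0 by omega), if_pos (show m = s - 1 by omega)]
        exact div_nonneg (by linarith) (le_of_lt hsq)
    · rw [if_neg (by omega : ¬ m < s), if_neg (by omega : ¬ m + 1 < s)]
  constructor
  · intro i j
    rw [hinv, hM]
    by_cases hi : (i : ℕ) < s
    · rw [if_pos hi]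
      split_ifs
      · exact div_nonneg (by norm_num) hr0.le
      · exact le_refl 0
    · rw [if_neg hi]
      have := hgstep (j : ℕ)
      linarith
  · intro i
    rw [hinv]
    simp only [Matrix.mulVec, dotProduct, Matrix.smul_apply, smul_eq_mul, mul_one]
    rw [← Finset.mul_sum]
    by_cases hi : (i : ℕ) < s
    · have hsum : (∑ j : Fin (s+1), (K * sspC s r g) i j)
          = if 1 ≤ (i : ℕ) then 1 / r else 0 := by
        simp only [hM, if_pos hi]
        by_cases hi1 : 1 ≤ (i : ℕ)
        · rw [if_pos hi1]
          rw [Finset.sum_eq_single (⟨(i:ℕ) - 1, by omega⟩ : Fin (s+1))]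
          · rw [if_pos (by omega : (i:ℕ) = ((i:ℕ) - 1) + 1)]
          · intro k _ hne
            rw [if_neg]
            intro hk
            exact hne (Fin.ext (show (k : ℕ) = (i : ℕ) - 1 by omega))
          · intro h; exact absurd (Finset.mem_univ _) h
        · rw [if_neg hi1]
          apply Finset.sum_eq_zero
          intro k _
          rw [if_neg (by omega)]
      rw [hsum]
      by_cases hi1 : 1 ≤ (i : ℕ)
      · rw [if_pos hi1, mul_one_div, div_self hrne]
      · rw [if_neg hi1, mul_zero]; norm_num
    · have hsum : (∑ j : Fin (s+1), (K * sspC s r g) i j) = g 0 := by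
        simp only [hM, if_neg hi]
        rw [Fin.sum_univ_eq_sum_range (fun m => g m - g (m + 1)) (s + 1)]
        rw [Finset.sum_range_sub' g (s + 1), hgz (s + 1) (by omega), sub_zero]
      have hg0 : g 0 = ((s : ℝ) + 1) / (s : ℝ) ^ 2 := by
        have h0s : (0 : ℕ) < s := by omega
        simp [hg, h0s]
      rw [hsum, hg0, hrdef, ← mul_div_assoc, div_le_one hsq]
      nlinarith
end

section
/- The embedded weight vector b̃₂ = (3/14, 0, 0, 2/7, 0, 0, 0, 3/7, 0, 1/14)ᵀ for the SSPERK(10,4) method satisfies all third-order conditions — b̃₂ᵀe = 1, b̃₂ᵀc = 1/2, b̃₂ᵀc² = 1/3, and b̃₂ᵀ(c²/2 − Ac) = 0 — and violates a fourth-order condition: b̃₂ᵀc³ = 59/252 ≠ 1/4, where A and c are the SSPERK(10,4) coefficient matrix and abscissae. -/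
open Matrix

/-- Coefficient matrix of the optimal SSPERK(10,4) method (zero-indexed):
for `j < i`, the entry is `1/6` if `i ≤ 4` or `j ≥ 5`, and `1/15` otherwise. -/
noncomputable def A104 : Matrix (Fin 10) (Fin 10) ℝ :=
  Matrix.of fun i j =>
    if (j : ℕ) < (i : ℕ) then
      if (i : ℕ) ≤ 4 ∨ 5 ≤ (j : ℕ) then 1/6 else 1/15
    else 0

/-- Abscissae of the optimal SSPERK(10,4) method, `c = A·e`. -/
noncomputable def c104 : Fin 10 → ℝ := ![0, 1/6, 1/3, 1/2, 2/3, 1/3, 1/2, 2/3, 5/6, 1]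

/-- Embedded weight vector for SSPERK(10,4). -/
noncomputable def bt2 : Fin 10 → ℝ := ![3/14, 0, 0, 2/7, 0, 0, 0, 3/7, 0, 1/14]

/-- The embedded weight vector `bt2` for SSPERK(10,4) satisfies all
third-order conditions and violates the fourth-order condition
`wᵀc³ = 1/4`, having `wᵀc³ = 59 / 252`. -/
theorem ssperk104_embedded_bt2_third_order_not_fourth :
    (∑ j : Fin 10, bt2 j = 1) ∧
    (∑ j : Fin 10, bt2 j * c104 j = 1 / 2) ∧
    (∑ j : Fin 10, bt2 j * (c104 j) ^ 2 = 1 / 3) ∧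
    (∑ j : Fin 10, bt2 j * ((c104 j) ^ 2 / 2 - A104.mulVec c104 j) = 0) ∧
    (∑ j : Fin 10, bt2 j * (c104 j) ^ 3 = 59 / 252) ∧
    ((59 / 252 : ℝ) ≠ 1 / 4) := by
  refine ⟨?_, ?_, ?_, ?_, ?_, by norm_num⟩ <;>
  · simp only [A104, c104, bt2, mulVec, dotProduct, Fin.sum_univ_succ, Fin.sum_univ_zero, Matrix.of_apply,
      Matrix.cons_val_zero, Matrix.cons_val_one, Matrix.head_cons, Matrix.cons_val_succ]
    norm_num
end
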